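/- Let M be a finite-dimensional module over U_q(sl*₂,κ). Then there exist positive integers r and s such that Eʳ·M = 0 and Fˢ·M = 0; that is, the actions of E and F on M are nilpotent. -/

import Mathlib

noncomputable section

/-- `q` is not a root of unity (in particular nonzero). -/
def NotRootOfUnity (q : ℂ) : Prop := q ≠ 0 ∧ ∀ n : ℕ, 0 < n → q ^ n ≠ 1

/-- Defining relations of the Hopf PBW-deformation `U_q(sl*₂, κ)`: generators
`0 = K`, `1 = K⁻¹`, `2 = E`, `3 = F`, relations `KK⁻¹ = K⁻¹K = 1`, `KE = q²EK`,
`KF = q⁻²FK`, `EF - FE = a(Kᵐ - K⁻ᵐ)`.  The case `a = 0` is `U_q(sl*₂)` itself. -/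
inductive UqRel (q a : ℂ) (m : ℕ) : FreeAlgebra ℂ (Fin 4) → FreeAlgebra ℂ (Fin 4) → Prop
  | KKinv : UqRel q a m (FreeAlgebra.ι ℂ 0 * FreeAlgebra.ι ℂ 1) 1
  | KinvK : UqRel q a m (FreeAlgebra.ι ℂ 1 * FreeAlgebra.ι ℂ 0) 1
  | KE : UqRel q a m (FreeAlgebra.ι ℂ 0 * FreeAlgebra.ι ℂ 2)
      (q ^ 2 • (FreeAlgebra.ι ℂ 2 * FreeAlgebra.ι ℂ 0))
  | KF : UqRel q a m (FreeAlgebra.ι ℂ 0 * FreeAlgebra.ι ℂ 3)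
      ((q ^ 2)⁻¹ • (FreeAlgebra.ι ℂ 3 * FreeAlgebra.ι ℂ 0))
  | EF : UqRel q a m (FreeAlgebra.ι ℂ 2 * FreeAlgebra.ι ℂ 3)
      (FreeAlgebra.ι ℂ 3 * FreeAlgebra.ι ℂ 2 +
        a • (FreeAlgebra.ι ℂ 0 ^ m - FreeAlgebra.ι ℂ 1 ^ m))

/-- The algebra `U_q(sl*₂, κ)`; `a = 0` gives the new type quantum group `U_q(sl*₂)`. -/
abbrev Uq (q a : ℂ) (m : ℕ) : Type := RingQuot (UqRel q a m)

def genK (q a : ℂ) (m : ℕ) : Uq q a m := RingQuot.mkAlgHom ℂ (UqRel q a m) (FreeAlgebra.ι ℂ 0)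
def genKinv (q a : ℂ) (m : ℕ) : Uq q a m := RingQuot.mkAlgHom ℂ (UqRel q a m) (FreeAlgebra.ι ℂ 1)
def genE (q a : ℂ) (m : ℕ) : Uq q a m := RingQuot.mkAlgHom ℂ (UqRel q a m) (FreeAlgebra.ι ℂ 2)
def genF (q a : ℂ) (m : ℕ) : Uq q a m := RingQuot.mkAlgHom ℂ (UqRel q a m) (FreeAlgebra.ι ℂ 3)

open Module

/-- Powers of an element that is not a root of unity are injective. -/
lemma pow_inj_of_notRoot {c : ℂ} (hc0 : c ≠ 0) (hc : ∀ n : ℕ, 0 < n → c ^ n ≠ 1) :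
    Function.Injective fun k : ℕ => c ^ k := by
  intro k l h
  simp only at h
  rcases lt_trichotomy k l with hkl | hkl | hkl
  · exfalso
    have h2 : c ^ k * c ^ (l - k) = c ^ k * 1 := by
      rw [mul_one, ← pow_add, Nat.add_sub_cancel' hkl.le, h]
    exact hc (l - k) (Nat.sub_pos_of_lt hkl) (mul_left_cancel₀ (pow_ne_zero k hc0) h2)
  · exact hkl
  · exfalso
    have h2 : c ^ l * c ^ (k - l) = c ^ l * 1 := by
      rw [mul_one, ← pow_add, Nat.add_sub_cancel' hkl.le, ← h]
    exact hc (k - l) (Nat.sub_pos_of_lt hkl) (mul_left_cancel₀ (pow_ne_zero l hc0) h2)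

/-- Key linear-algebra lemma: if `T` is invertible, `c` is not a root of unity, and
`T * S = c • (S * T)`, then `S` is nilpotent. -/
lemma isNilpotent_of_twist {V : Type} [AddCommGroup V] [Module ℂ V] [FiniteDimensional ℂ V]
    (S T T' : Module.End ℂ V) (hT'T : T' * T = 1) {c : ℂ} (hc0 : c ≠ 0)
    (hc : ∀ n : ℕ, 0 < n → c ^ n ≠ 1) (hcomm : T * S = c • (S * T)) :
    IsNilpotent S := by
  have hcinv0 : c⁻¹ ≠ 0 := inv_ne_zero hc0
  have hcinv : ∀ n : ℕ, 0 < n → (c⁻¹) ^ n ≠ 1 := by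
    intro n hn h
    apply hc n hn
    have : (c ^ n) * (c⁻¹ ^ n) = c ^ n * 1 := by rw [h, mul_one]
    rw [mul_one, ← mul_pow, mul_inv_cancel₀ hc0, one_pow] at this
    exact this.symm
  -- eigenvalue shifting
  have step : ∀ μ : ℂ, S.HasEigenvalue μ → S.HasEigenvalue (c⁻¹ * μ) := by
    intro μ hμ
    obtain ⟨v, hv⟩ := hμ.exists_hasEigenvector
    have hv0 : v ≠ 0 := hv.2
    have hSv : S v = μ • v := hv.apply_eq_smul
    have hTv0 : T v ≠ 0 := by
      intro h
      have : T' (T v) = v := by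
        have := congrFun (congrArg DFunLike.coe hT'T) v
        simpa using this
      rw [h] at this
      simp at this
      exact hv0 this.symm
    have hSTv : S (T v) = (c⁻¹ * μ) • T v := by
      have h1 : T (S v) = c • S (T v) := by
        have := congrFun (congrArg DFunLike.coe hcomm) v
        simpa using this
      rw [hSv, map_smul] at h1
      have h2 : c⁻¹ • (μ • T v) = c⁻¹ • (c • S (T v)) := by rw [h1]
      rw [smul_smul, smul_smul, inv_mul_cancel₀ hc0, one_smul] at h2
      exact h2.symm
    exact Module.End.hasEigenvalue_of_hasEigenvector
      ⟨(Module.End.mem_eigenspace_iff).2 hSTv, hTv0⟩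
  -- all eigenvalues are zero
  have allzero : ∀ μ : ℂ, S.HasEigenvalue μ → μ = 0 := by
    intro μ hμ
    by_contra hμ0
    have hall : ∀ k : ℕ, S.HasEigenvalue ((c⁻¹) ^ k * μ) := by
      intro k
      induction k with
      | zero => simpa using hμ
      | succ n ih =>
        have := step _ ih
        rw [← mul_assoc, mul_comm c⁻¹ ((c⁻¹) ^ n), ← pow_succ] at this
        exact this
    have hinj : Function.Injective fun k : ℕ => (c⁻¹) ^ k * μ := by
      intro k l h
      simp only at h
      exact pow_inj_of_notRoot hcinv0 hcinv (mul_right_cancel₀ hμ0 h)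
    have hfin : Set.Finite (setOf S.HasEigenvalue) := Module.End.finite_hasEigenvalue S
    exact (Set.infinite_of_injective_forall_mem hinj (fun k => hall k)) hfin
  -- conclude via the minimal polynomial
  have hSint : IsIntegral ℂ S := Algebra.IsIntegral.isIntegral (R := ℂ) S
  set p := minpoly ℂ S with hp
  have hmon : p.Monic := minpoly.monic hSint
  have hsplit : Polynomial.Splits p := IsAlgClosed.splits p
  have hprod := hsplit.eq_prod_roots_of_monic hmon
  have hroots : ∀ r ∈ p.roots, r = (0 : ℂ) := by
    intro r hr
    have := Polynomial.isRoot_of_mem_roots hr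
    exact allzero r (Module.End.hasEigenvalue_of_isRoot this)
  have hrepl : p.roots = Multiset.replicate (Multiset.card p.roots) (0 : ℂ) :=
    (Multiset.eq_replicate_card).2 hroots
  have hpX : p = Polynomial.X ^ Multiset.card p.roots := by
    conv_lhs => rw [hprod, hrepl]
    rw [Multiset.map_replicate, Multiset.prod_replicate]
    simp
  refine ⟨Multiset.card p.roots, ?_⟩
  have := minpoly.aeval ℂ S
  rw [← hp, hpX] at this
  simpa using this

/-- on a finite-dimensional `U_q(sl*₂,κ)`-module, the actions of `E`
and `F` are nilpotent. -/
theorem stmt2 (q a : ℂ) (m : ℕ) (hm : 0 < m) (hq : NotRootOfUnity q)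
    (M : Type) [AddCommGroup M] [Module ℂ M] [Module (Uq q a m) M]
    [IsScalarTower ℂ (Uq q a m) M] [FiniteDimensional ℂ M] :
    ∃ r s : ℕ, 0 < r ∧ 0 < s ∧
      (∀ v : M, genE q a m ^ r • v = 0) ∧ (∀ v : M, genF q a m ^ s • v = 0) := by
  obtain ⟨hq0, hqru⟩ := hq
  haveI : SMulCommClass ℂ (Uq q a m) M := by
    constructor
    intro c u v
    calc c • u • v = (c • u) • v := (smul_assoc c u v).symm
      _ = (algebraMap ℂ (Uq q a m) c * u) • v := by rw [Algebra.smul_def]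
      _ = (u * algebraMap ℂ (Uq q a m) c) • v := by rw [Algebra.commutes]
      _ = u • (algebraMap ℂ (Uq q a m) c) • v := mul_smul _ _ _
      _ = u • c • v := by rw [algebraMap_smul]
  let φ : Uq q a m →ₐ[ℂ] Module.End ℂ M := Algebra.lsmul ℂ ℂ M
  -- the relations, pushed into the algebra
  have relKKinv : genK q a m * genKinv q a m = 1 := by
    have := RingQuot.mkAlgHom_rel ℂ (UqRel.KKinv (q := q) (a := a) (m := m))
    simpa [genK, genKinv, map_mul, map_one] using this
  have relKinvK : genKinv q a m * genK q a m = 1 := by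
    have := RingQuot.mkAlgHom_rel ℂ (UqRel.KinvK (q := q) (a := a) (m := m))
    simpa [genK, genKinv, map_mul, map_one] using this
  have relKE : genK q a m * genE q a m = (q ^ 2) • (genE q a m * genK q a m) := by
    have := RingQuot.mkAlgHom_rel ℂ (UqRel.KE (q := q) (a := a) (m := m))
    simpa [genK, genE, map_mul, map_smul] using this
  have relKF : genK q a m * genF q a m = (q ^ 2)⁻¹ • (genF q a m * genK q a m) := by
    have := RingQuot.mkAlgHom_rel ℂ (UqRel.KF (q := q) (a := a) (m := m))
    simpa [genK, genF, map_mul, map_smul] using this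
  set T : Module.End ℂ M := φ (genK q a m) with hT
  set T' : Module.End ℂ M := φ (genKinv q a m) with hT'
  set SE : Module.End ℂ M := φ (genE q a m) with hSE
  set SF : Module.End ℂ M := φ (genF q a m) with hSF
  have hT'T : T' * T = 1 := by rw [hT, hT', ← map_mul, relKinvK, map_one]
  have hcommE : T * SE = (q ^ 2) • (SE * T) := by
    rw [hT, hSE, ← map_mul, relKE, map_smul, map_mul]
  have hcommF : T * SF = (q ^ 2)⁻¹ • (SF * T) := by
    rw [hT, hSF, ← map_mul, relKF, map_smul, map_mul]
  have hq20 : (q ^ 2 : ℂ) ≠ 0 := pow_ne_zero 2 hq0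
  have hq2ru : ∀ n : ℕ, 0 < n → (q ^ 2 : ℂ) ^ n ≠ 1 := by
    intro n hn h
    rw [← pow_mul] at h
    exact hqru (2 * n) (by omega) h
  have hq2inv0 : ((q ^ 2 : ℂ))⁻¹ ≠ 0 := inv_ne_zero hq20
  have hq2invru : ∀ n : ℕ, 0 < n → ((q ^ 2 : ℂ)⁻¹) ^ n ≠ 1 := by
    intro n hn h
    apply hq2ru n hn
    have h2 : ((q ^ 2 : ℂ)) ^ n * ((q ^ 2 : ℂ)⁻¹) ^ n = ((q ^ 2 : ℂ)) ^ n * 1 := by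
      rw [h, mul_one]
    rwa [mul_one, ← mul_pow, mul_inv_cancel₀ hq20, one_pow, eq_comm] at h2
  obtain ⟨r0, hr0⟩ := isNilpotent_of_twist SE T T' hT'T hq20 hq2ru hcommE
  obtain ⟨s0, hs0⟩ := isNilpotent_of_twist SF T T' hT'T hq2inv0 hq2invru hcommF
  refine ⟨r0 + 1, s0 + 1, Nat.succ_pos _, Nat.succ_pos _, ?_, ?_⟩
  · intro v
    have : φ (genE q a m ^ (r0 + 1)) v = 0 := by
      rw [map_pow, ← hSE, pow_succ, hr0, zero_mul]
      rfl
    exact this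
  · intro v
    have : φ (genF q a m ^ (s0 + 1)) v = 0 := by
      rw [map_pow, ← hSF, pow_succ, hs0, zero_mul]
      rfl
    exact this

end
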